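/- Pierce's subject-reduction counterexample for one-step β-reduction in system B: in the context B = x : (σ₁→σ₁→τ) ∩ (σ₂→σ₂→τ), y : ρ → (σ₁∪σ₂), z : ρ, both x((Iy)z)((Iy)z) and x(yz)(yz) are typable with τ (where I = λw.w), but the intermediate one-step reducts x(yz)((Iy)z) and x((Iy)z)(yz) are not typable with τ in B. -/

import Mathlib

set_option autoImplicit false

namespace LFDelta

/-- Equivalence closure of a relation (conversion). -/
inductive Conv {α : Type} (r : α → α → Prop) : α → α → Prop
| rel {a b : α} : r a b → Conv r a b
| refl (a : α) : Conv r a a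
| symm {a b : α} : Conv r a b → Conv r b a
| trans {a b c : α} : Conv r a b → Conv r b c → Conv r a c

/-- Types of the intersection-union type assignment system B
    (with ⊤, used only for the extended system B⁺). -/
inductive BTy : Type
| atom (a : ℕ)
| top
| arr (σ τ : BTy)
| inter (σ τ : BTy)
| union (σ τ : BTy)
deriving DecidableEq

/-- ω-free types of system B. -/
def BTy.OmegaFree : BTy → Prop
| .atom _ => True
| .top => False
| .arr σ τ => σ.OmegaFree ∧ τ.OmegaFree
| .inter σ τ => σ.OmegaFree ∧ τ.OmegaFree
| .union σ τ => σ.OmegaFree ∧ τ.OmegaFree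

/-- Untyped λ-terms (de Bruijn), possibly containing constants
    (the constants c, c_× and c_{|σ|} are used for translations). -/
inductive Lam : Type
| var (n : ℕ)
| app (M N : Lam)
| lam (M : Lam)
| const (c : ℕ)
| cx
| cty (σ : BTy)
deriving DecidableEq

namespace Lam

/-- Pure λ-terms: no constants. -/
def Pure : Lam → Prop
| .var _ => True
| .app M N => Pure M ∧ Pure N
| .lam M => Pure M
| _ => False

/-- Lift (shift) free variables ≥ c by one. -/
def lift (c : ℕ) : Lam → Lam
| .var n => if n < c then .var n else .var (n+1)
| .app M N => .app (lift c M) (lift c N)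
| .lam M => .lam (lift (c+1) M)
| .const k => .const k
| .cx => .cx
| .cty σ => .cty σ

/-- Substitute N for variable k. -/
def subst (k : ℕ) (N : Lam) : Lam → Lam
| .var n => if n < k then .var n else if n = k then (lift 0)^[k] N else .var (n-1)
| .app M₁ M₂ => .app (subst k N M₁) (subst k N M₂)
| .lam M => .lam (subst (k+1) N M)
| .const c => .const c
| .cx => .cx
| .cty σ => .cty σ

/-- One-step β-reduction. -/
inductive StepB : Lam → Lam → Prop
| beta {M N : Lam} : StepB (.app (.lam M) N) (subst 0 N M)
| appL {M M' N : Lam} : StepB M M' → StepB (.app M N) (.app M' N)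
| appR {M N N' : Lam} : StepB N N' → StepB (.app M N) (.app M N')
| lam {M M' : Lam} : StepB M M' → StepB (.lam M) (.lam M')

/-- One-step η-reduction. -/
inductive StepE : Lam → Lam → Prop
| eta {M : Lam} : StepE (.lam (.app (lift 0 M) (.var 0))) M
| appL {M M' N : Lam} : StepE M M' → StepE (.app M N) (.app M' N)
| appR {M N N' : Lam} : StepE N N' → StepE (.app M N) (.app M N')
| lam {M M' : Lam} : StepE M M' → StepE (.lam M) (.lam M')

/-- β-convertibility. -/
def BetaEq : Lam → Lam → Prop := Conv StepB

/-- βη-convertibility. -/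
def BetaEtaEq : Lam → Lam → Prop := Conv (fun a b => StepB a b ∨ StepE a b)

/-- Strong β-normalization. -/
def SNBeta (M : Lam) : Prop := Acc (fun a b => StepB b a) M

end Lam

/-- The subtype theory Ξ of system B without the ω-axioms (5) and (13),
    i.e. axioms/rules (1)-(4), (6)-(12), (14). -/
inductive SubB : BTy → BTy → Prop
| idemInter {σ : BTy} : SubB σ (.inter σ σ)                                  -- (1)
| idemUnion {σ : BTy} : SubB (.union σ σ) σ                                  -- (2)
| interL {σ τ : BTy} : SubB (.inter σ τ) σ                                   -- (3)
| interR {σ τ : BTy} : SubB (.inter σ τ) τ                                   -- (3)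
| unionL {σ τ : BTy} : SubB σ (.union σ τ)                                   -- (4)
| unionR {σ τ : BTy} : SubB τ (.union σ τ)                                   -- (4)
| refl {σ : BTy} : SubB σ σ                                                  -- (6)
| monoInter {σ₁ σ₂ τ₁ τ₂ : BTy} :
    SubB σ₁ σ₂ → SubB τ₁ τ₂ → SubB (.inter σ₁ τ₁) (.inter σ₂ τ₂)             -- (7)
| monoUnion {σ₁ σ₂ τ₁ τ₂ : BTy} :
    SubB σ₁ σ₂ → SubB τ₁ τ₂ → SubB (.union σ₁ τ₁) (.union σ₂ τ₂)             -- (8)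
| trans {σ τ ρ : BTy} : SubB σ τ → SubB τ ρ → SubB σ ρ                        -- (9)
| dist {σ τ ρ : BTy} :
    SubB (.inter σ (.union τ ρ)) (.union (.inter σ τ) (.inter σ ρ))          -- (10)
| arrInter {σ τ ρ : BTy} :
    SubB (.inter (.arr σ τ) (.arr σ ρ)) (.arr σ (.inter τ ρ))                -- (11)
| arrUnion {σ τ ρ : BTy} :
    SubB (.inter (.arr σ ρ) (.arr τ ρ)) (.arr (.union σ τ) ρ)                -- (12)
| arrow {σ₁ σ₂ τ₁ τ₂ : BTy} :
    SubB σ₂ σ₁ → SubB τ₁ τ₂ → SubB (.arr σ₁ τ₁) (.arr σ₂ τ₂)                  -- (14)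

/-- The subtype theory Ξ' (Ξ without (5), (10), (13)), parametrized by
    additional axioms `ax`. -/
inductive Xi' (ax : BTy → BTy → Prop) : BTy → BTy → Prop
| ax {σ τ : BTy} : ax σ τ → Xi' ax σ τ
| idemInter {σ : BTy} : Xi' ax σ (.inter σ σ)
| idemUnion {σ : BTy} : Xi' ax (.union σ σ) σ
| interL {σ τ : BTy} : Xi' ax (.inter σ τ) σ
| interR {σ τ : BTy} : Xi' ax (.inter σ τ) τ
| unionL {σ τ : BTy} : Xi' ax σ (.union σ τ)
| unionR {σ τ : BTy} : Xi' ax τ (.union σ τ)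
| refl {σ : BTy} : Xi' ax σ σ
| monoInter {σ₁ σ₂ τ₁ τ₂ : BTy} :
    Xi' ax σ₁ σ₂ → Xi' ax τ₁ τ₂ → Xi' ax (.inter σ₁ τ₁) (.inter σ₂ τ₂)
| monoUnion {σ₁ σ₂ τ₁ τ₂ : BTy} :
    Xi' ax σ₁ σ₂ → Xi' ax τ₁ τ₂ → Xi' ax (.union σ₁ τ₁) (.union σ₂ τ₂)
| trans {σ τ ρ : BTy} : Xi' ax σ τ → Xi' ax τ ρ → Xi' ax σ ρ
| arrInter {σ τ ρ : BTy} :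
    Xi' ax (.inter (.arr σ τ) (.arr σ ρ)) (.arr σ (.inter τ ρ))
| arrUnion {σ τ ρ : BTy} :
    Xi' ax (.inter (.arr σ ρ) (.arr τ ρ)) (.arr (.union σ τ) ρ)
| arrow {σ₁ σ₂ τ₁ τ₂ : BTy} :
    Xi' ax σ₂ σ₁ → Xi' ax τ₁ τ₂ → Xi' ax (.arr σ₁ τ₁) (.arr σ₂ τ₂)

/-- Type assignment of system B (Curry style), extended with constant
    typing axioms `ξ` and the constants c_× and c_{|σ|} of B⁺.
    With `ξ := fun _ _ => False` and on pure terms this is exactly system B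
    without ω. -/
inductive BPlus (ξ : ℕ → BTy → Prop) : List BTy → Lam → BTy → Prop
| var {Γ : List BTy} {n : ℕ} {σ : BTy} :
    Γ[n]? = some σ → BPlus ξ Γ (.var n) σ
| const {Γ : List BTy} {c : ℕ} {σ : BTy} : ξ c σ → BPlus ξ Γ (.const c) σ
| cx {Γ : List BTy} : BPlus ξ Γ .cx (.arr .top (.arr .top .top))
| cty {Γ : List BTy} {σ : BTy} :
    BPlus ξ Γ (.cty σ) (.arr .top (.arr (.arr σ .top) .top))
| abs {Γ : List BTy} {M : Lam} {σ τ : BTy} :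
    BPlus ξ (σ :: Γ) M τ → BPlus ξ Γ (.lam M) (.arr σ τ)
| app {Γ : List BTy} {M N : Lam} {σ τ : BTy} :
    BPlus ξ Γ M (.arr σ τ) → BPlus ξ Γ N σ → BPlus ξ Γ (.app M N) τ
| interI {Γ : List BTy} {M : Lam} {σ τ : BTy} :
    BPlus ξ Γ M σ → BPlus ξ Γ M τ → BPlus ξ Γ M (.inter σ τ)
| interEl {Γ : List BTy} {M : Lam} {σ τ : BTy} :
    BPlus ξ Γ M (.inter σ τ) → BPlus ξ Γ M σ
| interEr {Γ : List BTy} {M : Lam} {σ τ : BTy} :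
    BPlus ξ Γ M (.inter σ τ) → BPlus ξ Γ M τ
| unionIl {Γ : List BTy} {M : Lam} {σ τ : BTy} :
    BPlus ξ Γ M σ → BPlus ξ Γ M (.union σ τ)
| unionIr {Γ : List BTy} {M : Lam} {σ τ : BTy} :
    BPlus ξ Γ M τ → BPlus ξ Γ M (.union σ τ)
| unionE {Γ : List BTy} {M N : Lam} {σ τ ρ : BTy} :
    BPlus ξ (σ :: Γ) M ρ → BPlus ξ (τ :: Γ) M ρ → BPlus ξ Γ N (.union σ τ) →
    BPlus ξ Γ (Lam.subst 0 N M) ρ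
| sub {Γ : List BTy} {M : Lam} {σ τ : BTy} :
    BPlus ξ Γ M σ → SubB σ τ → BPlus ξ Γ M τ

/-- The pseudo-terms of LF_Δ: kinds, families and objects in a single syntax
    (the typing judgments single out each syntactic class). -/
inductive Tm : Type
| type                        -- the kind Type
| pi (σ τ : Tm)               -- Πx:σ.K and Πx:σ.τ
| rarr (σ τ : Tm)             -- relevant family σ →ʳ τ
| inter (σ τ : Tm)            -- intersection family
| union (σ τ : Tm)            -- union family
| const (c : ℕ)               -- constants (family- and object-level)
| var (n : ℕ)                 -- variables (de Bruijn)
| lam (σ Δ : Tm)              -- λx:σ.Δ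
| app (Δ₁ Δ₂ : Tm)            -- application (of families and of objects)
| rlam (σ Δ : Tm)             -- relevant abstraction λʳx:σ.Δ
| rapp (Δ₁ Δ₂ : Tm)           -- relevant application
| pair (Δ₁ Δ₂ : Tm)           -- strong pair ⟨Δ₁,Δ₂⟩
| copair (Δ₁ Δ₂ : Tm)         -- strong co-pair [Δ₁,Δ₂]
| prl (Δ : Tm)                -- left projection
| prr (Δ : Tm)                -- right projection
| inl (σ Δ : Tm)              -- injection in_l^σ Δ
| inr (σ Δ : Tm)              -- injection in_r^σ Δ
deriving DecidableEq

namespace Tm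

/-- Lift free variables ≥ c by one. -/
def lift (c : ℕ) : Tm → Tm
| .type => .type
| .pi σ τ => .pi (lift c σ) (lift (c+1) τ)
| .rarr σ τ => .rarr (lift c σ) (lift c τ)
| .inter σ τ => .inter (lift c σ) (lift c τ)
| .union σ τ => .union (lift c σ) (lift c τ)
| .const k => .const k
| .var n => if n < c then .var n else .var (n+1)
| .lam σ Δ => .lam (lift c σ) (lift (c+1) Δ)
| .app Δ₁ Δ₂ => .app (lift c Δ₁) (lift c Δ₂)
| .rlam σ Δ => .rlam (lift c σ) (lift (c+1) Δ)
| .rapp Δ₁ Δ₂ => .rapp (lift c Δ₁) (lift c Δ₂)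
| .pair Δ₁ Δ₂ => .pair (lift c Δ₁) (lift c Δ₂)
| .copair Δ₁ Δ₂ => .copair (lift c Δ₁) (lift c Δ₂)
| .prl Δ => .prl (lift c Δ)
| .prr Δ => .prr (lift c Δ)
| .inl σ Δ => .inl (lift c σ) (lift c Δ)
| .inr σ Δ => .inr (lift c σ) (lift c Δ)

/-- Substitute the object N for variable k. -/
def subst (k : ℕ) (N : Tm) : Tm → Tm
| .type => .type
| .pi σ τ => .pi (subst k N σ) (subst (k+1) N τ)
| .rarr σ τ => .rarr (subst k N σ) (subst k N τ)
| .inter σ τ => .inter (subst k N σ) (subst k N τ)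
| .union σ τ => .union (subst k N σ) (subst k N τ)
| .const c => .const c
| .var n => if n < k then .var n else if n = k then (lift 0)^[k] N else .var (n-1)
| .lam σ Δ => .lam (subst k N σ) (subst (k+1) N Δ)
| .app Δ₁ Δ₂ => .app (subst k N Δ₁) (subst k N Δ₂)
| .rlam σ Δ => .rlam (subst k N σ) (subst (k+1) N Δ)
| .rapp Δ₁ Δ₂ => .rapp (subst k N Δ₁) (subst k N Δ₂)
| .pair Δ₁ Δ₂ => .pair (subst k N Δ₁) (subst k N Δ₂)
| .copair Δ₁ Δ₂ => .copair (subst k N Δ₁) (subst k N Δ₂)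
| .prl Δ => .prl (subst k N Δ)
| .prr Δ => .prr (subst k N Δ)
| .inl σ Δ => .inl (subst k N σ) (subst k N Δ)
| .inr σ Δ => .inr (subst k N σ) (subst k N Δ)

end Tm

/-- The essence function: compositionally erases all type annotations and
    proof-functional constructs (on non-objects it returns a dummy value). -/
def essence : Tm → Lam
| .var n => .var n
| .const c => .const c
| .lam _ Δ => .lam (essence Δ)
| .rlam _ Δ => .lam (essence Δ)
| .app Δ₁ Δ₂ => .app (essence Δ₁) (essence Δ₂)
| .rapp _ Δ₂ => essence Δ₂
| .pair Δ₁ _ => essence Δ₁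
| .copair Δ₁ _ => essence Δ₁
| .prl Δ => essence Δ
| .prr Δ => essence Δ
| .inl _ Δ => essence Δ
| .inr _ Δ => essence Δ
| .type => .const 0
| .pi _ _ => .const 0
| .rarr _ _ => .const 0
| .inter _ _ => .const 0
| .union _ _ => .const 0

/-- One-step reduction →_Δ of LF_Δ. Congruence rules are standard, except
    that the components of strong pairs and co-pairs must reduce in parallel,
    keeping identical essences. -/
inductive Step : Tm → Tm → Prop
| beta {σ Δ₁ Δ₂ : Tm} : Step (.app (.lam σ Δ₁) Δ₂) (Tm.subst 0 Δ₂ Δ₁)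
| rbeta {σ Δ₁ Δ₂ : Tm} : Step (.rapp (.rlam σ Δ₁) Δ₂) (Tm.subst 0 Δ₂ Δ₁)
| prl {Δ₁ Δ₂ : Tm} : Step (.prl (.pair Δ₁ Δ₂)) Δ₁
| prr {Δ₁ Δ₂ : Tm} : Step (.prr (.pair Δ₁ Δ₂)) Δ₂
| coInl {Δ₁ Δ₂ σ Δ₃ : Tm} :
    Step (.app (.copair Δ₁ Δ₂) (.inl σ Δ₃)) (.app Δ₁ Δ₃)
| coInr {Δ₁ Δ₂ σ Δ₃ : Tm} :
    Step (.app (.copair Δ₁ Δ₂) (.inr σ Δ₃)) (.app Δ₂ Δ₃)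
| piL {σ σ' τ : Tm} : Step σ σ' → Step (.pi σ τ) (.pi σ' τ)
| piR {σ τ τ' : Tm} : Step τ τ' → Step (.pi σ τ) (.pi σ τ')
| rarrL {σ σ' τ : Tm} : Step σ σ' → Step (.rarr σ τ) (.rarr σ' τ)
| rarrR {σ τ τ' : Tm} : Step τ τ' → Step (.rarr σ τ) (.rarr σ τ')
| interL {σ σ' τ : Tm} : Step σ σ' → Step (.inter σ τ) (.inter σ' τ)
| interR {σ τ τ' : Tm} : Step τ τ' → Step (.inter σ τ) (.inter σ τ')
| unionL {σ σ' τ : Tm} : Step σ σ' → Step (.union σ τ) (.union σ' τ)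
| unionR {σ τ τ' : Tm} : Step τ τ' → Step (.union σ τ) (.union σ τ')
| lamL {σ σ' Δ : Tm} : Step σ σ' → Step (.lam σ Δ) (.lam σ' Δ)
| lamR {σ Δ Δ' : Tm} : Step Δ Δ' → Step (.lam σ Δ) (.lam σ Δ')
| rlamL {σ σ' Δ : Tm} : Step σ σ' → Step (.rlam σ Δ) (.rlam σ' Δ)
| rlamR {σ Δ Δ' : Tm} : Step Δ Δ' → Step (.rlam σ Δ) (.rlam σ Δ')
| appL {Δ₁ Δ₁' Δ₂ : Tm} : Step Δ₁ Δ₁' → Step (.app Δ₁ Δ₂) (.app Δ₁' Δ₂)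
| appR {Δ₁ Δ₂ Δ₂' : Tm} : Step Δ₂ Δ₂' → Step (.app Δ₁ Δ₂) (.app Δ₁ Δ₂')
| rappL {Δ₁ Δ₁' Δ₂ : Tm} : Step Δ₁ Δ₁' → Step (.rapp Δ₁ Δ₂) (.rapp Δ₁' Δ₂)
| rappR {Δ₁ Δ₂ Δ₂' : Tm} : Step Δ₂ Δ₂' → Step (.rapp Δ₁ Δ₂) (.rapp Δ₁ Δ₂')
| prlC {Δ Δ' : Tm} : Step Δ Δ' → Step (.prl Δ) (.prl Δ')
| prrC {Δ Δ' : Tm} : Step Δ Δ' → Step (.prr Δ) (.prr Δ')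
| inlL {σ σ' Δ : Tm} : Step σ σ' → Step (.inl σ Δ) (.inl σ' Δ)
| inlR {σ Δ Δ' : Tm} : Step Δ Δ' → Step (.inl σ Δ) (.inl σ Δ')
| inrL {σ σ' Δ : Tm} : Step σ σ' → Step (.inr σ Δ) (.inr σ' Δ)
| inrR {σ Δ Δ' : Tm} : Step Δ Δ' → Step (.inr σ Δ) (.inr σ Δ')
| pairC {Δ₁ Δ₁' Δ₂ Δ₂' : Tm} :
    Step Δ₁ Δ₁' → Step Δ₂ Δ₂' → essence Δ₁' = essence Δ₂' →
    Step (.pair Δ₁ Δ₂) (.pair Δ₁' Δ₂')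
| copairC {Δ₁ Δ₁' Δ₂ Δ₂' : Tm} :
    Step Δ₁ Δ₁' → Step Δ₂ Δ₂' → essence Δ₁' = essence Δ₂' →
    Step (.copair Δ₁ Δ₂) (.copair Δ₁' Δ₂')

/-- Definitional equality =_Δ : the symmetric reflexive transitive closure
    of →_Δ. -/
def DefEq : Tm → Tm → Prop := Conv Step

/-- Strong normalization w.r.t. →_Δ. -/
def SNTm (t : Tm) : Prop := Acc (fun a b => Step b a) t

/-- Signature entries: kind declarations a:K and type declarations c:σ. -/
inductive SigEntry : Type
| kd (a : ℕ) (K : Tm)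
| ty (c : ℕ) (σ : Tm)
deriving DecidableEq

abbrev Sig := List SigEntry
abbrev Ctx := List Tm

/-- c is declared in the signature. -/
def inDom (S : Sig) (c : ℕ) : Prop :=
  (∃ K, SigEntry.kd c K ∈ S) ∨ (∃ σ, SigEntry.ty c σ ∈ S)

/-- Context lookup, with the appropriate lifting. -/
inductive VarTy : Ctx → ℕ → Tm → Prop
| zero {Γ : Ctx} {σ : Tm} : VarTy (σ :: Γ) 0 (Tm.lift 0 σ)
| succ {Γ : Ctx} {n : ℕ} {σ τ : Tm} :
    VarTy Γ n σ → VarTy (τ :: Γ) (n+1) (Tm.lift 0 σ)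

mutual
/-- Σ is a valid signature. -/
inductive SigOk : Sig → Prop
| nil : SigOk []
| kd {S : Sig} {a : ℕ} {K : Tm} :
    SigOk S → KindOk S [] K → ¬ inDom S a → SigOk (.kd a K :: S)
| ty {S : Sig} {c : ℕ} {σ : Tm} :
    SigOk S → FamTy S [] σ .type → ¬ inDom S c → SigOk (.ty c σ :: S)

/-- Γ is a valid context in Σ. -/
inductive CtxOk : Sig → Ctx → Prop
| nil {S : Sig} : SigOk S → CtxOk S []
| cons {S : Sig} {Γ : Ctx} {σ : Tm} :
    CtxOk S Γ → FamTy S Γ σ .type → CtxOk S (σ :: Γ)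

/-- K is a kind in Γ and Σ. -/
inductive KindOk : Sig → Ctx → Tm → Prop
| type {S : Sig} {Γ : Ctx} : CtxOk S Γ → KindOk S Γ .type
| pi {S : Sig} {Γ : Ctx} {σ K : Tm} :
    FamTy S Γ σ .type → KindOk S (σ :: Γ) K → KindOk S Γ (.pi σ K)

/-- σ has kind K in Γ and Σ. -/
inductive FamTy : Sig → Ctx → Tm → Tm → Prop
| const {S : Sig} {Γ : Ctx} {a : ℕ} {K : Tm} :
    CtxOk S Γ → SigEntry.kd a K ∈ S → FamTy S Γ (.const a) K
| pi {S : Sig} {Γ : Ctx} {σ τ : Tm} :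
    FamTy S Γ σ .type → FamTy S (σ :: Γ) τ .type → FamTy S Γ (.pi σ τ) .type
| app {S : Sig} {Γ : Ctx} {σ τ K Δ : Tm} :
    FamTy S Γ σ (.pi τ K) → ObjTy S Γ Δ τ →
    FamTy S Γ (.app σ Δ) (Tm.subst 0 Δ K)
| rarr {S : Sig} {Γ : Ctx} {σ τ : Tm} :
    FamTy S Γ σ .type → FamTy S Γ τ .type → FamTy S Γ (.rarr σ τ) .type
| inter {S : Sig} {Γ : Ctx} {σ τ : Tm} :
    FamTy S Γ σ .type → FamTy S Γ τ .type → FamTy S Γ (.inter σ τ) .type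
| union {S : Sig} {Γ : Ctx} {σ τ : Tm} :
    FamTy S Γ σ .type → FamTy S Γ τ .type → FamTy S Γ (.union σ τ) .type
| conv {S : Sig} {Γ : Ctx} {σ K₁ K₂ : Tm} :
    FamTy S Γ σ K₁ → KindOk S Γ K₂ → DefEq K₁ K₂ → FamTy S Γ σ K₂

/-- Δ has type σ in Γ and Σ. -/
inductive ObjTy : Sig → Ctx → Tm → Tm → Prop
| const {S : Sig} {Γ : Ctx} {c : ℕ} {σ : Tm} :
    CtxOk S Γ → SigEntry.ty c σ ∈ S → ObjTy S Γ (.const c) σ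
| var {S : Sig} {Γ : Ctx} {n : ℕ} {σ : Tm} :
    CtxOk S Γ → VarTy Γ n σ → ObjTy S Γ (.var n) σ
| lam {S : Sig} {Γ : Ctx} {σ τ Δ : Tm} :
    ObjTy S (σ :: Γ) Δ τ → ObjTy S Γ (.lam σ Δ) (.pi σ τ)
| app {S : Sig} {Γ : Ctx} {σ τ Δ₁ Δ₂ : Tm} :
    ObjTy S Γ Δ₁ (.pi σ τ) → ObjTy S Γ Δ₂ σ →
    ObjTy S Γ (.app Δ₁ Δ₂) (Tm.subst 0 Δ₂ τ)
| rlam {S : Sig} {Γ : Ctx} {σ τ Δ : Tm} :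
    ObjTy S (σ :: Γ) Δ (Tm.lift 0 τ) →
    Lam.BetaEtaEq (essence Δ) (.var 0) →
    ObjTy S Γ (.rlam σ Δ) (.rarr σ τ)
| rapp {S : Sig} {Γ : Ctx} {σ τ Δ₁ Δ₂ : Tm} :
    ObjTy S Γ Δ₁ (.rarr σ τ) → ObjTy S Γ Δ₂ σ → ObjTy S Γ (.rapp Δ₁ Δ₂) τ
| pair {S : Sig} {Γ : Ctx} {σ τ Δ₁ Δ₂ : Tm} :
    ObjTy S Γ Δ₁ σ → ObjTy S Γ Δ₂ τ →
    Lam.BetaEtaEq (essence Δ₁) (essence Δ₂) →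
    ObjTy S Γ (.pair Δ₁ Δ₂) (.inter σ τ)
| prl {S : Sig} {Γ : Ctx} {σ τ Δ : Tm} :
    ObjTy S Γ Δ (.inter σ τ) → ObjTy S Γ (.prl Δ) σ
| prr {S : Sig} {Γ : Ctx} {σ τ Δ : Tm} :
    ObjTy S Γ Δ (.inter σ τ) → ObjTy S Γ (.prr Δ) τ
| inl {S : Sig} {Γ : Ctx} {σ τ Δ : Tm} :
    ObjTy S Γ Δ σ → FamTy S Γ (.union σ τ) .type →
    ObjTy S Γ (.inl τ Δ) (.union σ τ)
| inr {S : Sig} {Γ : Ctx} {σ τ Δ : Tm} :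
    ObjTy S Γ Δ τ → FamTy S Γ (.union σ τ) .type →
    ObjTy S Γ (.inr σ Δ) (.union σ τ)
| copair {S : Sig} {Γ : Ctx} {σ τ ρ Δ₁ Δ₂ : Tm} :
    ObjTy S Γ Δ₁
      (.pi σ (Tm.subst 0 (.inl (Tm.lift 0 τ) (.var 0)) (Tm.lift 1 ρ))) →
    ObjTy S Γ Δ₂
      (.pi τ (Tm.subst 0 (.inr (Tm.lift 0 σ) (.var 0)) (Tm.lift 1 ρ))) →
    FamTy S (.union σ τ :: Γ) ρ .type →
    Lam.BetaEtaEq (essence Δ₁) (essence Δ₂) →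
    ObjTy S Γ (.copair Δ₁ Δ₂) (.pi (.union σ τ) ρ)
| conv {S : Sig} {Γ : Ctx} {σ τ Δ : Tm} :
    ObjTy S Γ Δ σ → FamTy S Γ τ .type → DefEq σ τ → ObjTy S Γ Δ τ
end

/-- The dependency-erasing translation |·| on families and kinds. -/
def eraseTy : Tm → BTy
| .type => .top
| .pi σ τ => .arr (eraseTy σ) (eraseTy τ)
| .rarr σ τ => .arr (eraseTy σ) (eraseTy τ)
| .inter σ τ => .inter (eraseTy σ) (eraseTy τ)
| .union σ τ => .union (eraseTy σ) (eraseTy τ)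
| .const a => .atom a
| .app σ _ => eraseTy σ
| _ => .top

/-- The forgetful translation ‖·‖ of LF_Δ objects and families into pure
    λ-terms with constants, flattening type annotations into redexes. -/
def tr : Tm → Lam
| .type => .const 0
| .pi σ τ => .app (.app (.cty (eraseTy σ)) (tr σ)) (.lam (tr τ))
| .rarr σ τ => .app (.app .cx (tr σ)) (tr τ)
| .inter σ τ => .app (.app .cx (tr σ)) (tr τ)
| .union σ τ => .app (.app .cx (tr σ)) (tr τ)
| .const c => .const c
| .var n => .var n
| .lam σ Δ => .app (.lam (.lam (Lam.lift 1 (tr Δ)))) (tr σ)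
| .rlam σ Δ => .app (.lam (.lam (Lam.lift 1 (tr Δ)))) (tr σ)
| .app Δ₁ Δ₂ => .app (tr Δ₁) (tr Δ₂)
| .rapp Δ₁ Δ₂ => .app (tr Δ₁) (tr Δ₂)
| .pair Δ₁ _ => tr Δ₁
| .copair Δ₁ _ => tr Δ₁
| .prl Δ => tr Δ
| .prr Δ => tr Δ
| .inl σ Δ => .app (.lam (Lam.lift 0 (tr Δ))) (tr σ)
| .inr σ Δ => .app (.lam (Lam.lift 0 (tr Δ))) (tr σ)

/-- Constant typing axioms of B⁺ induced by a signature. -/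
def sigXi (S : Sig) : ℕ → BTy → Prop :=
  fun c τ => (∃ σ, SigEntry.ty c σ ∈ S ∧ τ = eraseTy σ) ∨
             (∃ K, SigEntry.kd c K ∈ S ∧ τ = eraseTy K)

/-- Embedding of (non-dependent, relevance-free) B types as LF_Δ families. -/
def toFam : BTy → Tm
| .atom a => .const a
| .top => .const 0
| .arr σ τ => .pi (toFam σ) (Tm.lift 0 (toFam τ))
| .inter σ τ => .inter (toFam σ) (toFam τ)
| .union σ τ => .union (toFam σ) (toFam τ)


/-! ### Auxiliary finite model for Pierce's counterexample -/

namespace PierceModel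

/-- Carrier of a finite applicative structure.  `bot` belongs to every type
interpretation; `vz`, `vy`, `vx` interpret the variables z, y, x; `vp` is a
"poison" element sharing the type profile of `vz`; `iE` interprets the
identity `I = λw.w`; `vy2 = iE · vy` behaves like `vy` but resolves the union
the other way; `el` interprets all other abstractions. -/
inductive D : Type
| bot | vz | vp | vy | vy2 | vs1 | vs2 | vx | u1 | u2 | vt | vj | el | iE
deriving DecidableEq

/-- Application table. -/
def ap : D → D → D
| .vy, .vz => .vs1
| .vy, .vp => .vs2
| .vy2, .vz => .vs2
| .vy2, .vp => .vs2
| .iE, .vy => .vy2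
| .vx, .vs1 => .u1
| .vx, .vs2 => .u2
| .u1, .vs1 => .vt
| .u1, .vs2 => .vj
| .u2, .vs2 => .vt
| .u2, .vs1 => .vj
| _, _ => .bot

/-- Interpretation of λ-abstractions. -/
def L (f : D → D) : D := if f .vy = .vy then .iE else .el

/-- Atom interpretations (besides the everywhere-present `bot`). -/
def aden : ℕ → D → Prop
| 0, d => d = .vs1
| 1, d => d = .vs2
| 2, d => d = .vt
| 3, d => d = .vz ∨ d = .vp
| _+4, _ => False

/-- Type interpretation. -/
def den : BTy → D → Prop
| .atom a, d => d = .bot ∨ aden a d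
| .top, _ => True
| .arr σ τ, d => ∀ e, den σ e → den τ (ap d e)
| .inter σ τ, d => den σ d ∧ den τ d
| .union σ τ, d => den σ d ∨ den τ d

lemma bot_den : ∀ φ, den φ .bot
| .atom _ => Or.inl rfl
| .top => trivial
| .arr σ τ => fun e _ => by
    have h : ap .bot e = .bot := by cases e <;> rfl
    rw [h]; exact bot_den τ
| .inter σ τ => ⟨bot_den σ, bot_den τ⟩
| .union σ τ => Or.inl (bot_den σ)

/-- The poison `vp` inhabits every type that `vz` does. -/
lemma pz : ∀ φ, den φ .vz → den φ .vp := by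
  intro φ
  induction φ with
  | atom a =>
    intro h
    rcases h with h | h
    · exact absurd h (by decide)
    · match a, h with
      | 0, h => exact nomatch h
      | 1, h => exact nomatch h
      | 2, h => exact nomatch h
      | 3, _ => exact Or.inr (Or.inr rfl)
  | top => exact fun _ => trivial
  | arr σ τ ihσ ihτ =>
    intro _ e _
    have h : ap .vp e = .bot := by cases e <;> rfl
    rw [h]; exact bot_den τ
  | inter σ τ ihσ ihτ => exact fun h => ⟨ihσ h.1, ihτ h.2⟩
  | union σ τ ihσ ihτ =>
    exact fun h => h.elim (fun h => Or.inl (ihσ h)) (fun h => Or.inr (ihτ h))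

/-- `vy2` inhabits every type that `vy` does. -/
lemma y2y : ∀ φ, den φ .vy → den φ .vy2 := by
  intro φ
  induction φ with
  | atom a =>
    intro h
    rcases h with h | h
    · exact absurd h (by decide)
    · match a, h with
      | 0, h => exact nomatch h
      | 1, h => exact nomatch h
      | 2, h => exact nomatch h
      | 3, h => exact h.elim (fun h => nomatch h) (fun h => nomatch h)
  | top => exact fun _ => trivial
  | arr σ τ ihσ ihτ =>
    intro h e he
    cases e <;>
      first
        | exact h .vp (pz σ he)
        | exact h .vp he
        | (have hb : den τ D.bot := bot_den τ; exact hb)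
  | inter σ τ ihσ ihτ => exact fun h => ⟨ihσ h.1, ihτ h.2⟩
  | union σ τ ihσ ihτ =>
    exact fun h => h.elim (fun h => Or.inl (ihσ h)) (fun h => Or.inr (ihτ h))

/-- Soundness of the subtype theory. -/
lemma subb_den {σ τ : BTy} (h : SubB σ τ) : ∀ d, den σ d → den τ d := by
  induction h with
  | idemInter => exact fun d h => ⟨h, h⟩
  | idemUnion => exact fun d h => h.elim id id
  | interL => exact fun d h => h.1
  | interR => exact fun d h => h.2
  | unionL => exact fun d h => Or.inl h
  | unionR => exact fun d h => Or.inr h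
  | refl => exact fun d h => h
  | monoInter h1 h2 ih1 ih2 => exact fun d h => ⟨ih1 d h.1, ih2 d h.2⟩
  | monoUnion h1 h2 ih1 ih2 =>
    exact fun d h => h.elim (fun h => Or.inl (ih1 d h)) (fun h => Or.inr (ih2 d h))
  | trans h1 h2 ih1 ih2 => exact fun d h => ih2 d (ih1 d h)
  | dist =>
    exact fun d h => h.2.elim (fun h2 => Or.inl ⟨h.1, h2⟩) (fun h2 => Or.inr ⟨h.1, h2⟩)
  | arrInter => exact fun d h e he => ⟨h.1 e he, h.2 e he⟩
  | arrUnion => exact fun d h e he => he.elim (fun he => h.1 e he) (fun he => h.2 e he)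
  | arrow h1 h2 ih1 ih2 => exact fun d h e he => ih2 _ (h e (ih1 e he))

/-- Environment extension. -/
def cons (d : D) (θ : ℕ → D) : ℕ → D
| 0 => d
| n+1 => θ n

/-- Term evaluation. -/
def eval : Lam → (ℕ → D) → D
| .var n, θ => θ n
| .app M N, θ => ap (eval M θ) (eval N θ)
| .lam M, θ => L (fun e => eval M (cons e θ))
| .const _, _ => .bot
| .cx, _ => .bot
| .cty _, _ => .bot

lemma eval_lift : ∀ (M : Lam) (c : ℕ) (θ : ℕ → D),
    eval (Lam.lift c M) θ = eval M (fun n => θ (if n < c then n else n+1)) := by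
  intro M
  induction M with
  | var n =>
    intro c θ
    by_cases h : n < c <;> simp [Lam.lift, eval, h]
  | app M N ihM ihN => intro c θ; simp [Lam.lift, eval, ihM, ihN]
  | lam M ih =>
    intro c θ
    simp only [Lam.lift, eval]
    congr 1
    funext e
    rw [ih]
    congr 1
    funext n
    cases n with
    | zero => simp [cons]
    | succ n =>
      have h2 : (n+1 < c+1) ↔ (n < c) := by omega
      by_cases h : n < c <;> simp [cons, h2, h]
  | const c => intro c θ; rfl
  | cx => intro c θ; rfl
  | cty σ => intro c θ; rfl

lemma eval_liftIter : ∀ (k : ℕ) (N : Lam) (θ : ℕ → D),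
    eval ((Lam.lift 0)^[k] N) θ = eval N (fun n => θ (n + k)) := by
  intro k
  induction k with
  | zero => intro N θ; rfl
  | succ k ih =>
    intro N θ
    rw [Function.iterate_succ_apply', eval_lift, ih]
    congr 1

lemma eval_subst : ∀ (M : Lam) (k : ℕ) (N : Lam) (θ : ℕ → D),
    eval (Lam.subst k N M) θ =
      eval M (fun n => if n < k then θ n
        else if n = k then eval N (fun m => θ (m + k)) else θ (n - 1)) := by
  intro M
  induction M with
  | var n =>
    intro k N θ
    by_cases h1 : n < k
    · simp [Lam.subst, h1, eval]
    · by_cases h2 : n = k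
      · simp [Lam.subst, h1, h2, eval, eval_liftIter]
      · simp [Lam.subst, h1, h2, eval]
  | app M N ihM ihN => intro k N' θ; simp [Lam.subst, eval, ihM, ihN]
  | lam M ih =>
    intro k N θ
    simp only [Lam.subst, eval]
    congr 1
    funext e
    rw [ih]
    congr 1
    funext n
    cases n with
    | zero => simp [cons]
    | succ n =>
      by_cases h1 : n < k
      · have h1' : n + 1 < k + 1 := by omega
        simp [cons, h1, h1']
      · by_cases h2 : n = k
        · subst h2
          simp only [cons, Nat.lt_irrefl, if_false, if_pos rfl, Nat.add_lt_add_iff_right,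
            h1]
          rfl
        · have h1' : ¬ (n + 1 < k + 1) := by omega
          have h2' : ¬ (n + 1 = k + 1) := by omega
          obtain ⟨n', rfl⟩ : ∃ n', n = n' + 1 := ⟨n - 1, by omega⟩
          simp [cons, h1, h2, h1', h2']
  | const c => intro k N θ; rfl
  | cx => intro k N θ; rfl
  | cty σ => intro k N θ; rfl

lemma eval_subst0 (M N : Lam) (θ : ℕ → D) :
    eval (Lam.subst 0 N M) θ = eval M (cons (eval N θ) θ) := by
  rw [eval_subst]
  congr 1
  funext n
  cases n with
  | zero => rfl
  | succ n => rfl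

/-- Environment agreement with a context. -/
def envOK (Γ : List BTy) (θ : ℕ → D) : Prop :=
  ∀ n σ, Γ[n]? = some σ → den σ (θ n)

lemma envOK_cons {Γ : List BTy} {σ : BTy} {d : D} {θ : ℕ → D}
    (hd : den σ d) (h : envOK Γ θ) : envOK (σ :: Γ) (cons d θ) := by
  intro n τ hn
  cases n with
  | zero =>
    simp only [List.getElem?_cons_zero, List.getElem?_cons_succ] at hn
    injection hn with hn
    subst hn
    exact hd
  | succ n => exact h n τ hn

/-- Soundness of system B typing with respect to the finite model. -/
theorem sound {Γ : List BTy} {T : Lam} {φ : BTy}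
    (h : BPlus (fun _ _ => False) Γ T φ) :
    ∀ θ : ℕ → D, envOK Γ θ → den φ (eval T θ) := by
  induction h with
  | var hn => exact fun θ hθ => hθ _ _ hn
  | const hc => exact absurd hc id
  | cx => exact fun θ hθ e _ e' _ => trivial
  | cty => exact fun θ hθ e _ e' _ => trivial
  | abs hM ih =>
    intro θ hθ e he
    have hfe := ih (cons e θ) (envOK_cons he hθ)
    show den _ (ap (L fun e => eval _ (cons e θ)) e)
    rw [L]
    split
    · rename_i hf
      by_cases hy : e = .vy
      · subst hy
        have hf' : eval _ (cons D.vy θ) = D.vy := hf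
        rw [hf'] at hfe
        exact y2y _ hfe
      · have hb : ap .iE e = .bot := by
          cases e <;> first | rfl | exact absurd rfl hy
        rw [hb]
        exact bot_den _
    · have hb : ap .el e = .bot := by cases e <;> rfl
      rw [hb]
      exact bot_den _
  | app hM hN ihM ihN => exact fun θ hθ => ihM θ hθ _ (ihN θ hθ)
  | interI h1 h2 ih1 ih2 => exact fun θ hθ => ⟨ih1 θ hθ, ih2 θ hθ⟩
  | interEl h1 ih => exact fun θ hθ => (ih θ hθ).1
  | interEr h1 ih => exact fun θ hθ => (ih θ hθ).2
  | unionIl h1 ih => exact fun θ hθ => Or.inl (ih θ hθ)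
  | unionIr h1 ih => exact fun θ hθ => Or.inr (ih θ hθ)
  | unionE h1 h2 h3 ih1 ih2 ih3 =>
    intro θ hθ
    rw [eval_subst0]
    rcases ih3 θ hθ with h | h
    · exact ih1 _ (envOK_cons h hθ)
    · exact ih2 _ (envOK_cons h hθ)
  | sub h1 hst ih => exact fun θ hθ => subb_den hst _ (ih θ hθ)

/-- The distinguished environment. -/
def θ0 : ℕ → D
| 0 => .vz
| 1 => .vy
| 2 => .vx
| _+3 => .bot

lemma den_z : den (.atom 3) D.vz := Or.inr (Or.inl rfl)

lemma den_y : den (.arr (.atom 3) (.union (.atom 0) (.atom 1))) D.vy := by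
  intro e he
  rcases he with h | h | h
  · subst h; exact Or.inl (Or.inl rfl)
  · subst h; exact Or.inl (Or.inr rfl)
  · subst h; exact Or.inr (Or.inr rfl)

lemma den_x :
    den (.inter (.arr (.atom 0) (.arr (.atom 0) (.atom 2)))
      (.arr (.atom 1) (.arr (.atom 1) (.atom 2)))) D.vx := by
  constructor
  · intro a ha
    rcases ha with h | h <;> subst h
    · intro b _
      have hb : ap (ap D.vx D.bot) b = .bot := by cases b <;> rfl
      rw [hb]; exact Or.inl rfl
    · intro b hb
      rcases hb with h | h <;> subst h
      · exact Or.inl rfl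
      · exact Or.inr rfl
  · intro a ha
    rcases ha with h | h <;> subst h
    · intro b _
      have hb : ap (ap D.vx D.bot) b = .bot := by cases b <;> rfl
      rw [hb]; exact Or.inl rfl
    · intro b hb
      rcases hb with h | h <;> subst h
      · exact Or.inl rfl
      · exact Or.inr rfl

lemma envOK_θ0 : envOK
    [.atom 3, .arr (.atom 3) (.union (.atom 0) (.atom 1)),
     .inter (.arr (.atom 0) (.arr (.atom 0) (.atom 2)))
       (.arr (.atom 1) (.arr (.atom 1) (.atom 2)))] θ0 := by
  intro n σ hn
  match n, hn with
  | 0, hn =>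
    simp only [List.getElem?_cons_zero, List.getElem?_cons_succ] at hn
    injection hn with hn; subst hn; exact den_z
  | 1, hn =>
    simp only [List.getElem?_cons_zero, List.getElem?_cons_succ] at hn
    injection hn with hn; subst hn; exact den_y
  | 2, hn =>
    simp only [List.getElem?_cons_zero, List.getElem?_cons_succ] at hn
    injection hn with hn; subst hn; exact den_x
  | n+3, hn =>
    exact absurd hn (by simp)

end PierceModel

/-- Pierce's counterexample to one-step subject reduction in system B.
    Context (de Bruijn: x = var 2, y = var 1, z = var 0):
    x : (σ₁→σ₁→τ) ∩ (σ₂→σ₂→τ), y : ρ → σ₁∪σ₂, z : ρ, with σ₁ = atom 0,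
    σ₂ = atom 1, τ = atom 2, ρ = atom 3.  Both x((Iy)z)((Iy)z) and x(yz)(yz)
    have type τ, but the one-step reducts x(yz)((Iy)z) and x((Iy)z)(yz)
    do not. -/
theorem pierce_subject_reduction_counterexample :
    let σ₁ : BTy := .atom 0
    let σ₂ : BTy := .atom 1
    let τ : BTy := .atom 2
    let ρ : BTy := .atom 3
    let Γ : List BTy :=
      [ρ, .arr ρ (.union σ₁ σ₂),
       .inter (.arr σ₁ (.arr σ₁ τ)) (.arr σ₂ (.arr σ₂ τ))]
    let I : Lam := .lam (.var 0)
    let iyz : Lam := .app (.app I (.var 1)) (.var 0)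
    let yz : Lam := .app (.var 1) (.var 0)
    BPlus (fun _ _ => False) Γ (.app (.app (.var 2) iyz) iyz) τ ∧
    BPlus (fun _ _ => False) Γ (.app (.app (.var 2) yz) yz) τ ∧
    ¬ BPlus (fun _ _ => False) Γ (.app (.app (.var 2) yz) iyz) τ ∧
    ¬ BPlus (fun _ _ => False) Γ (.app (.app (.var 2) iyz) yz) τ := by
  intro σ₁ σ₂ τ ρ Γ I iyz yz
  -- abbreviations
  have hI : ∀ φ : BTy, BPlus (fun _ _ => False) Γ I (.arr φ φ) :=
    fun φ => .abs (.var rfl)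
  have hiyz : BPlus (fun _ _ => False) Γ iyz (.union σ₁ σ₂) :=
    .app (.app (hI (.arr ρ (.union σ₁ σ₂))) (.var rfl)) (.var rfl)
  have hyz : BPlus (fun _ _ => False) Γ yz (.union σ₁ σ₂) :=
    .app (.var rfl) (.var rfl)
  have hM1 : BPlus (fun _ _ => False) (σ₁ :: Γ)
      (.app (.app (.var 3) (.var 0)) (.var 0)) τ :=
    .app (.app (.sub (.var rfl) .interL) (.var rfl)) (.var rfl)
  have hM2 : BPlus (fun _ _ => False) (σ₂ :: Γ)
      (.app (.app (.var 3) (.var 0)) (.var 0)) τ :=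
    .app (.app (.sub (.var rfl) .interR) (.var rfl)) (.var rfl)
  refine ⟨?_, ?_, ?_, ?_⟩
  · -- x((Iy)z)((Iy)z) : τ
    have h := BPlus.unionE hM1 hM2 hiyz
    have he : Lam.subst 0 iyz (.app (.app (.var 3) (.var 0)) (.var 0)) =
        .app (.app (.var 2) iyz) iyz := by decide
    rwa [he] at h
  · -- x(yz)(yz) : τ
    have h := BPlus.unionE hM1 hM2 hyz
    have he : Lam.subst 0 yz (.app (.app (.var 3) (.var 0)) (.var 0)) =
        .app (.app (.var 2) yz) yz := by decide
    rwa [he] at h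
  · -- ¬ x(yz)((Iy)z) : τ
    intro h
    have hs := PierceModel.sound h PierceModel.θ0 PierceModel.envOK_θ0
    have he : PierceModel.eval (.app (.app (.var 2) yz) iyz) PierceModel.θ0
        = .vj := by decide
    rw [he] at hs
    rcases hs with hs | hs
    · exact nomatch hs
    · exact nomatch hs
  · -- ¬ x((Iy)z)(yz) : τ
    intro h
    have hs := PierceModel.sound h PierceModel.θ0 PierceModel.envOK_θ0
    have he : PierceModel.eval (.app (.app (.var 2) iyz) yz) PierceModel.θ0
        = .vj := by decide
    rw [he] at hs
    rcases hs with hs | hs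
    · exact nomatch hs
    · exact nomatch hs

end LFDelta
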